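/- For every integer n ≥ 1 and every q ∈ ℍ, the conjugate Fueter operator applied to the monomial q ↦ qⁿ satisfies: D̄(qⁿ) = 2 ( n q^{n−1} + Σ_{k=1}^{n} q^{n−k} q̄^{k−1} ). -/

import Mathlib

noncomputable section

open scoped Quaternion
open Finset

/-- The imaginary units `e₁, e₂, e₃` of the quaternions `ℍ = ℍ[ℝ]`. -/
def e1 : ℍ[ℝ] := ⟨0, 1, 0, 0⟩
def e2 : ℍ[ℝ] := ⟨0, 0, 1, 0⟩
def e3 : ℍ[ℝ] := ⟨0, 0, 0, 1⟩

/-- The (left) Fueter operator `Df = ∂_{q₀}f + e₁∂_{q₁}f + e₂∂_{q₂}f + e₃∂_{q₃}f`,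
where the partial derivatives are the directional derivatives along `1, e₁, e₂, e₃`. -/
def Dop (f : ℍ[ℝ] → ℍ[ℝ]) (q : ℍ[ℝ]) : ℍ[ℝ] :=
  fderiv ℝ f q 1 + e1 * fderiv ℝ f q e1 + e2 * fderiv ℝ f q e2 + e3 * fderiv ℝ f q e3

/-- The (left) conjugate Fueter operator
`D̄f = ∂_{q₀}f − e₁∂_{q₁}f − e₂∂_{q₂}f − e₃∂_{q₃}f`. -/
def Dbar (f : ℍ[ℝ] → ℍ[ℝ]) (q : ℍ[ℝ]) : ℍ[ℝ] :=
  fderiv ℝ f q 1 - e1 * fderiv ℝ f q e1 - e2 * fderiv ℝ f q e2 - e3 * fderiv ℝ f q e3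

/-- The right Fueter operator `fD = ∂_{q₀}f + (∂_{q₁}f)e₁ + (∂_{q₂}f)e₂ + (∂_{q₃}f)e₃`. -/
def DopR (f : ℍ[ℝ] → ℍ[ℝ]) (q : ℍ[ℝ]) : ℍ[ℝ] :=
  fderiv ℝ f q 1 + fderiv ℝ f q e1 * e1 + fderiv ℝ f q e2 * e2 + fderiv ℝ f q e3 * e3

/-- The right conjugate Fueter operator
`fD̄ = ∂_{q₀}f − (∂_{q₁}f)e₁ − (∂_{q₂}f)e₂ − (∂_{q₃}f)e₃`. -/
def DbarR (f : ℍ[ℝ] → ℍ[ℝ]) (q : ℍ[ℝ]) : ℍ[ℝ] :=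
  fderiv ℝ f q 1 - fderiv ℝ f q e1 * e1 - fderiv ℝ f q e2 * e2 - fderiv ℝ f q e3 * e3

/-- The Laplacian in the four real variables `q₀, q₁, q₂, q₃`. -/
def Lap (f : ℍ[ℝ] → ℍ[ℝ]) (q : ℍ[ℝ]) : ℍ[ℝ] :=
  fderiv ℝ (fun p => fderiv ℝ f p 1) q 1 + fderiv ℝ (fun p => fderiv ℝ f p e1) q e1 +
    fderiv ℝ (fun p => fderiv ℝ f p e2) q e2 + fderiv ℝ (fun p => fderiv ℝ f p e3) q e3

/-- `s ∈ [q]`: membership in the 2-sphere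
`[q] = {p : Re(p) = Re(q), |Im(p)| = |Im(q)|}` of `q`. -/
def inSphereOf (s q : ℍ[ℝ]) : Prop := s.re = q.re ∧ ‖s.im‖ = ‖q.im‖

/-- `Q_{c,s}(q) = s² − 2 Re(q) s + |q|²`. -/
def Qc (s q : ℍ[ℝ]) : ℍ[ℝ] := s ^ 2 - 2 * (q.re : ℍ[ℝ]) * s + ((‖q‖ ^ 2 : ℝ) : ℍ[ℝ])

/-- The left slice hyperholomorphic Cauchy kernel `S_L^{-1}(s,q) = (s − q̄) Q_{c,s}(q)⁻¹`. -/
def SL (s q : ℍ[ℝ]) : ℍ[ℝ] := (s - star q) * (Qc s q)⁻¹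

/-- The right slice hyperholomorphic Cauchy kernel `S_R^{-1}(s,q) = Q_{c,s}(q)⁻¹ (s − q̄)`. -/
def SR (s q : ℍ[ℝ]) : ℍ[ℝ] := (Qc s q)⁻¹ * (s - star q)

/-- The left `F`-kernel `F_L(s,q) = −4 (s − q̄) Q_{c,s}(q)^{-2}`. -/
def FL (s q : ℍ[ℝ]) : ℍ[ℝ] := -4 * (s - star q) * ((Qc s q)⁻¹) ^ 2

/-- The right `F`-kernel `F_R(s,q) = −4 Q_{c,s}(q)^{-2} (s − q̄)`. -/
def FR (s q : ℍ[ℝ]) : ℍ[ℝ] := -4 * ((Qc s q)⁻¹) ^ 2 * (s - star q)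

/-- The Clifford–Appell polynomials
`Q_ℓ(q,q̄) = (2/((ℓ+1)(ℓ+2))) Σ_{j=0}^{ℓ} (ℓ−j+1) q^{ℓ−j} q̄^j`. -/
def QA (ℓ : ℕ) (q : ℍ[ℝ]) : ℍ[ℝ] :=
  ((2 : ℝ) / ((ℓ + 1) * (ℓ + 2))) •
    ∑ j ∈ Finset.range (ℓ + 1), ((ℓ - j + 1 : ℕ) : ℍ[ℝ]) * q ^ (ℓ - j) * (star q) ^ j

lemma key (a : ℍ[ℝ]) : a - e1 * a * e1 - e2 * a * e2 - e3 * a * e3 = 2 * (a + star a) := by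
  rw [two_mul]
  ext <;> simp [Quaternion.re_mul, Quaternion.imI_mul, Quaternion.imJ_mul, Quaternion.imK_mul] <;> simp [e1, e2, e3] <;> ring

lemma commq (q : ℍ[ℝ]) : Commute q (star q) := by
  unfold Commute SemiconjBy
  ext <;> simp <;> ring

lemma hasFDerivAt_pow_quat (n : ℕ) (q : ℍ[ℝ]) :
    HasFDerivAt (fun p : ℍ[ℝ] => p ^ n)
      (∑ i ∈ Finset.range n,
        ((ContinuousLinearMap.mul ℝ ℍ[ℝ] (q ^ i)).comp
          ((ContinuousLinearMap.mul ℝ ℍ[ℝ]).flip (q ^ (n - 1 - i))))) q := by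
  induction n with
  | zero => simpa using hasFDerivAt_const (1 : ℍ[ℝ]) q
  | succ n ih =>
    have h := ih.mul' (hasFDerivAt_id q)
    have heq : (fun y : ℍ[ℝ] => y ^ n * id y) = fun y => y ^ (n + 1) := by
      funext y; rw [id, pow_succ]
    rw [show ((fun p : ℍ[ℝ] => p ^ n) * id) = fun y => y ^ (n + 1) from heq] at h
    refine h.congr_fderiv ?_
    refine ContinuousLinearMap.ext fun v => ?_
    simp only [ContinuousLinearMap.sum_apply, ContinuousLinearMap.comp_apply,
      ContinuousLinearMap.mul_apply', ContinuousLinearMap.flip_apply,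
      ContinuousLinearMap.add_apply, ContinuousLinearMap.smul_apply,
      ContinuousLinearMap.smulRight_apply, ContinuousLinearMap.coe_id', id_eq,
      Finset.sum_range_succ, smul_eq_mul, op_smul_eq_mul]
    rw [Finset.sum_mul, add_comm]
    congr 1
    · apply Finset.sum_congr rfl
      intro i hi
      rw [Finset.mem_range] at hi
      have h2 : n + 1 - 1 - i = (n - 1 - i) + 1 := by omega
      rw [h2, pow_succ, mul_assoc, mul_assoc]
    · simp

/-- for `n ≥ 1`,
`D̄(qⁿ) = 2 (n q^{n−1} + Σ_{k=1}^{n} q^{n−k} q̄^{k−1})`. -/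
theorem Dbar_pow (n : ℕ) (hn : 1 ≤ n) (q : ℍ[ℝ]) :
    Dbar (fun p => p ^ n) q =
      2 * ((n : ℍ[ℝ]) * q ^ (n - 1)
        + ∑ k ∈ Finset.Icc 1 n, q ^ (n - k) * (star q) ^ (k - 1)) := by
  have hf := (hasFDerivAt_pow_quat n q).fderiv
  unfold Dbar
  rw [hf]
  simp only [ContinuousLinearMap.sum_apply, ContinuousLinearMap.comp_apply,
    ContinuousLinearMap.mul_apply', ContinuousLinearMap.flip_apply, Finset.mul_sum,
    one_mul]
  rw [← Finset.sum_sub_distrib, ← Finset.sum_sub_distrib, ← Finset.sum_sub_distrib]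
  have hterm : ∀ i ∈ Finset.range n,
      q ^ i * q ^ (n - 1 - i) - e1 * (q ^ i * (e1 * q ^ (n - 1 - i)))
        - e2 * (q ^ i * (e2 * q ^ (n - 1 - i))) - e3 * (q ^ i * (e3 * q ^ (n - 1 - i)))
      = 2 * q ^ (n - 1) + 2 * (q ^ (n - 1 - i) * star q ^ i) := by
    intro i hi
    rw [Finset.mem_range] at hi
    have hl : q ^ i * q ^ (n-1-i) - e1*(q^i*(e1*q^(n-1-i))) - e2*(q^i*(e2*q^(n-1-i)))
          - e3*(q^i*(e3*q^(n-1-i)))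
        = (q^i - e1*q^i*e1 - e2*q^i*e2 - e3*q^i*e3) * q^(n-1-i) := by noncomm_ring
    rw [hl, key, star_pow]
    have hd : (2*(q^i + (star q)^i)) * q^(n-1-i)
        = 2*(q^i*q^(n-1-i)) + 2*((star q)^i*q^(n-1-i)) := by noncomm_ring
    rw [hd, ← pow_add]
    have he : i + (n - 1 - i) = n - 1 := by omega
    rw [he, ((commq q).symm.pow_pow i (n-1-i)).eq]
  rw [Finset.sum_congr rfl hterm, Finset.sum_add_distrib, Finset.sum_const,
    ← Finset.Ico_add_one_right_eq_Icc, Finset.sum_Ico_eq_sum_range]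
  have hs : ∀ i ∈ Finset.range (n + 1 - 1),
      q ^ (n - (1 + i)) * (star q) ^ (1 + i - 1) = q ^ (n - 1 - i) * (star q) ^ i := by
    intro i hi
    congr 1 <;> congr 1 <;> omega
  rw [Finset.sum_congr (by rw [Nat.add_sub_cancel]) hs, ← Finset.mul_sum, mul_add]
  congr 1
  rw [nsmul_eq_mul, Finset.card_range, ← mul_assoc, ← mul_assoc, (Nat.cast_commute n (2:ℍ[ℝ])).eq]

end
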